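/- arXiv:2207.08231 — 3 statements merged into one kernel-verified Lean document; each statement's English description precedes it below -/
import Mathlib

section
/- The map f₃ : W_n → S_n is a bijection, where f₃(w) is the permutation built in cycle notation by: start the current cycle with 1; reading w from position n down to position 2, if w[i] > 1 insert the (w[i]−1)-th smallest letter of {2,…,n} not yet used at the end of the current cycle, and if w[i] = 1 close the current cycle and start a new cycle whose first element is the smallest unused letter; finally close the last cycle. -/
/-- `IsWord n w` : `w` encodes a word in `[1] × [2] × ⋯ × [n]` (1-indexed letters). -/
def IsWord (n : ℕ) (w : ℕ → ℕ) : Prop :=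
  ∀ i, 1 ≤ i → i ≤ n → 1 ≤ w i ∧ w i ≤ i

/-- `IsPermList n l` : `l` is the one-line notation of a permutation of `{1,…,n}`. -/
def IsPermList (n : ℕ) (l : List ℕ) : Prop :=
  l.Perm (List.range' 1 n)

/-- `f₁` : at step `k` insert the letter `k` at position `w k` from the right. -/
def f1List (n : ℕ) (w : ℕ → ℕ) : List ℕ :=
  (List.range n).foldl (fun L k => L.insertIdx (k + 1 - w (k + 1)) (k + 1)) []

/-- Auxiliary for `f₂`: entry at position `i` is the `w i`-th smallest available number. -/
def f2Go (w : ℕ → ℕ) : ℕ → List ℕ → List ℕ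
  | 0, _ => []
  | i + 1, avail =>
      let x := avail.getD (w (i + 1) - 1) 0
      f2Go w i (avail.erase x) ++ [x]

/-- `f₂` : the entry at position `i` is the `w i`-th smallest element of `{1,…,n}`
not occurring at positions `i+1,…,n`. -/
def f2List (n : ℕ) (w : ℕ → ℕ) : List ℕ :=
  f2Go w n (List.range' 1 n)

/-- `g₁` : at step `k` insert the letter `k` at position `w k` from the left. -/
def g1List (n : ℕ) (w : ℕ → ℕ) : List ℕ :=
  (List.range n).foldl (fun L k => L.insertIdx (w (k + 1) - 1) (k + 1)) []

/-- Auxiliary for `g₂`. -/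
def g2Go (w : ℕ → ℕ) : ℕ → List ℕ → List ℕ
  | 0, _ => []
  | j + 1, avail =>
      let x := avail.getD (w (j + 1) - 1) 0
      x :: g2Go w j (avail.erase x)

/-- `g₂` : the entry at position `i` is the `w (n+1-i)`-th smallest element of `{1,…,n}`
not occurring at positions `1,…,i-1`. -/
def g2List (n : ℕ) (w : ℕ → ℕ) : List ℕ :=
  g2Go w n (List.range' 1 n)

/-- Apply a single cycle, written as a list, to `x`. -/
def applyCycle (c : List ℕ) (x : ℕ) : ℕ :=
  if x ∈ c then c.getD ((c.idxOf x + 1) % c.length) x else x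

/-- Apply a permutation given in cycle notation (a list of cycles) to `x`. -/
def applyCycles (cs : List (List ℕ)) (x : ℕ) : ℕ :=
  match cs.find? (fun c => c.contains x) with
  | some c => applyCycle c x
  | none => x

/-- Auxiliary for `f₃`: arguments are the index being read, the closed cycles,
the current cycle, and the list of unused letters (sorted). -/
def f3Go (w : ℕ → ℕ) : ℕ → List (List ℕ) → List ℕ → List ℕ → List (List ℕ)
  | 0, done, cur, _ => done ++ [cur]
  | 1, done, cur, _ => done ++ [cur]
  | i + 2, done, cur, avail =>
      if w (i + 2) = 1 then
        f3Go w (i + 1) (done ++ [cur]) [avail.headD 0] avail.tail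
      else
        let x := avail.getD (w (i + 2) - 2) 0
        f3Go w (i + 1) done (cur ++ [x]) (avail.erase x)

/-- `f₃` in cycle notation: reading `w` from position `n` down to `2`, if `w i > 1`
append the `(w i - 1)`-th smallest unused letter of `{2,…,n}` to the current cycle,
and if `w i = 1` close the current cycle and start a new one with the smallest
unused letter.  The first cycle starts with `1`. -/
def f3Cycles (n : ℕ) (w : ℕ → ℕ) : List (List ℕ) :=
  f3Go w n [] [1] (List.range' 2 (n - 1))

/-- One-line notation of `f₃ w`. -/
def f3OneLine (n : ℕ) (w : ℕ → ℕ) : List ℕ :=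
  (List.range' 1 n).map (applyCycles (f3Cycles n w))

/-- `f₄` as a function: recursively, if `w (m+1) = 1` adjoin the fixed point `m+1`,
and if `w (m+1) = k > 1` insert `m+1` immediately after `k - 1` in its cycle. -/
def f4Fun (w : ℕ → ℕ) : ℕ → ℕ → ℕ
  | 0, x => x
  | m + 1, x =>
      if w (m + 1) = 1 then f4Fun w m x
      else if x = w (m + 1) - 1 then m + 1
      else if x = m + 1 then f4Fun w m (w (m + 1) - 1)
      else f4Fun w m x

/-- One-line notation of `f₄ w`. -/
def f4OneLine (n : ℕ) (w : ℕ → ℕ) : List ℕ :=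
  (List.range' 1 n).map (f4Fun w n)

/-- One-line notation of the inverse of the permutation with one-line notation `l`. -/
def invList (n : ℕ) (l : List ℕ) : List ℕ :=
  (List.range' 1 n).map (fun k => l.idxOf k + 1)

/-- The permutation (as a function) with one-line notation `l`. -/
def permOf (l : List ℕ) (k : ℕ) : ℕ := l.getD (k - 1) 0

/-- The forward orbit of `x` under `σ`. -/
def orbitOf (σ : ℕ → ℕ) (x : ℕ) : Set ℕ := {y | ∃ m, σ^[m] x = y}

/-- The number of orbits of `σ` on `{1,…,n}`. -/
noncomputable def numCycles (n : ℕ) (σ : ℕ → ℕ) : ℕ :=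
  {s : Set ℕ | ∃ x, 1 ≤ x ∧ x ≤ n ∧ s = orbitOf σ x}.ncard

lemma f3Go_acc (w : ℕ → ℕ) : ∀ i done cur avail,
    f3Go w i done cur avail = done ++ f3Go w i [] cur avail := by
  intro i
  induction i using Nat.strong_induction_on with
  | _ i ih =>
    match i with
    | 0 => intro done cur avail; simp [f3Go]
    | 1 => intro done cur avail; simp [f3Go]
    | i+2 =>
      intro done cur avail
      rw [f3Go, f3Go]
      split
      · rw [ih (i+1) (by omega) (done ++ [cur])]
        simp only [List.append_assoc, List.singleton_append, List.nil_append]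
        rw [ih (i+1) (by omega) [cur]]
        simp
      · rw [ih (i+1) (by omega)]

/-- the first cycle output extends `cur`. -/
lemma f3Go_head (w : ℕ → ℕ) : ∀ i cur avail,
    ∃ t rest, f3Go w i [] cur avail = (cur ++ t) :: rest := by
  intro i
  induction i using Nat.strong_induction_on with
  | _ i ih =>
    match i with
    | 0 => intro cur avail; exact ⟨[], [], by simp [f3Go]⟩
    | 1 => intro cur avail; exact ⟨[], [], by simp [f3Go]⟩
    | i+2 =>
      intro cur avail
      rw [f3Go]
      split
      · rw [f3Go_acc]
        exact ⟨[], f3Go w (i+1) [] [avail.headD 0] avail.tail, by simp⟩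

      · obtain ⟨t, rest, h⟩ := ih (i+1) (by omega) (cur ++ [avail.getD (w (i + 2) - 2) 0]) (avail.erase (avail.getD (w (i + 2) - 2) 0))
        refine ⟨[avail.getD (w (i + 2) - 2) 0] ++ t, rest, by rw [h]; simp⟩

def GoodChain : List (List ℕ) → Prop
  | [] => True
  | c :: rest => (∃ h t, c = h :: t ∧ (∀ x ∈ t ++ rest.flatten, h < x)) ∧ GoodChain rest

lemma f3Go_spec (w : ℕ → ℕ) : ∀ i h t avail, 1 ≤ i →
    avail.Pairwise (·<·) → avail.length = i - 1 →
    ((h :: t) ++ avail).Nodup →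
    (∀ x ∈ t ++ avail, h < x) →
    (∀ j, 2 ≤ j → j ≤ i → 1 ≤ w j ∧ w j ≤ j) →
    (f3Go w i [] (h::t) avail).flatten.Perm ((h::t) ++ avail) ∧
    GoodChain (f3Go w i [] (h::t) avail) := by
  intro i
  induction i using Nat.strong_induction_on with
  | _ i ih =>
    match i with
    | 0 => intro h t avail h1; omega
    | 1 =>
      intro h t avail _ _ hlen hnd hlt hw
      have hav : avail = [] := List.length_eq_zero_iff.mp (by simpa using hlen)
      subst hav
      refine ⟨by simp [f3Go], ⟨h, t, rfl, ?_⟩, trivial⟩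
      simpa using fun x hx => hlt x (by simpa using hx)
    | i+2 =>
      intro h t avail _ hsort hlen hnd hlt hw
      by_cases hf : w (i+2) = 1
      · -- flag case
        obtain ⟨a, as, rfl⟩ : ∃ a as, avail = a :: as := by
          cases avail with
          | nil => simp at hlen
          | cons a as => exact ⟨a, as, rfl⟩
        rw [f3Go, if_pos hf]
        simp only [List.headD_cons, List.tail_cons, List.nil_append]
        rw [f3Go_acc]
        have hndas : ([a] ++ as).Nodup := by
          have : (a :: as).Nodup := (List.sublist_append_right (h::t) _).nodup hnd
          simpa using this
        obtain ⟨hperm, hgood⟩ := ih (i+1) (by omega) a [] as (by omega)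
          (List.Pairwise.of_cons hsort) (by simpa using hlen) (by simpa using hndas)
          (by simpa using fun x hx => (List.pairwise_cons.mp hsort).1 x hx)
          (fun j h2 hj => hw j h2 (by omega))
        constructor
        · have h2 : (f3Go w (i+1) [] [a] as).flatten.Perm (a :: as) := by simpa using hperm
          simpa using h2.append_left (h::t)
        · show GoodChain ((h::t) :: f3Go w (i+1) [] [a] as)
          refine ⟨⟨h, t, rfl, ?_⟩, hgood⟩
          intro x hx
          rcases List.mem_append.mp hx with hx | hx
          · exact hlt x (List.mem_append_left _ hx)
          · have : x ∈ [a] ++ as := hperm.mem_iff.mp hx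
            exact hlt x (List.mem_append_right _ (by simpa using this))
      · -- non-flag case
        have hwb := hw (i+2) (by omega) (le_refl _)
        have hidx : w (i+2) - 2 < avail.length := by omega
        set x := avail.getD (w (i+2) - 2) 0 with hx
        have hxmem : x ∈ avail := by
          rw [hx, List.getD_eq_getElem _ _ hidx]; exact List.getElem_mem _
        have hpe : avail.Perm (x :: avail.erase x) := List.perm_cons_erase hxmem
        have hperm2 : ((h::t) ++ avail).Perm ((h :: (t ++ [x])) ++ avail.erase x) := by
          have := hpe.append_left (h::t)
          simpa using this
        rw [f3Go, if_neg hf]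
        obtain ⟨hperm, hgood⟩ := ih (i+1) (by omega) h (t ++ [x]) (avail.erase x) (by omega)
          (hsort.erase x) (by rw [List.length_erase_of_mem hxmem]; omega)
          (hperm2.nodup hnd)
          (by
            intro y hy
            simp only [List.append_assoc, List.mem_append, List.mem_singleton] at hy
            rcases hy with hy | hy | hy
            · exact hlt y (List.mem_append_left _ hy)
            · rw [hy]; exact hlt x (List.mem_append_right _ hxmem)
            · exact hlt y (List.mem_append_right _ (List.mem_of_mem_erase hy)))
          (fun j h2 hj => hw j h2 (by omega))
        exact ⟨hperm.trans hperm2.symm, hgood⟩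

lemma applyCycles_cons_of_mem {c : List ℕ} {x : ℕ} (cs : List (List ℕ)) (hx : x ∈ c) :
    applyCycles (c :: cs) x = applyCycle c x := by
  unfold applyCycles
  rw [List.find?_cons_of_pos (p := fun c : List ℕ => c.contains x) (by simpa using hx)]

lemma applyCycles_cons_of_not_mem {c : List ℕ} {x : ℕ} (cs : List (List ℕ)) (hx : x ∉ c) :
    applyCycles (c :: cs) x = applyCycles cs x := by
  unfold applyCycles
  rw [List.find?_cons_of_neg (p := fun c : List ℕ => c.contains x) (by simpa using hx)]

lemma applyCycles_eq_of_mem : ∀ {cs : List (List ℕ)} {c : List ℕ} {x : ℕ},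
    cs.flatten.Nodup → c ∈ cs → x ∈ c → applyCycles cs x = applyCycle c x := by
  intro cs
  induction cs with
  | nil => intro c x _ hc; simp at hc
  | cons c₀ rest ih =>
    intro c x hnd hc hx
    by_cases h0 : x ∈ c₀
    · rw [applyCycles_cons_of_mem _ h0]
      rcases List.mem_cons.mp hc with rfl | hc'
      · rfl
      · exfalso
        have hdisj := List.disjoint_of_nodup_append (by simpa using hnd)
        exact hdisj h0 (List.mem_flatten.mpr ⟨c, hc', hx⟩)
    · rw [applyCycles_cons_of_not_mem _ h0]
      rcases List.mem_cons.mp hc with rfl | hc'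
      · exact absurd hx h0
      · exact ih (by simpa using (List.Nodup.of_append_right (by simpa using hnd))) hc' hx

lemma applyCycles_eq_of_not_mem : ∀ {cs : List (List ℕ)} {x : ℕ},
    x ∉ cs.flatten → applyCycles cs x = x := by
  intro cs
  induction cs with
  | nil => intro x _; rfl
  | cons c₀ rest ih =>
    intro x hx
    simp only [List.flatten_cons, List.mem_append] at hx
    push_neg at hx
    rw [applyCycles_cons_of_not_mem _ hx.1]
    exact ih hx.2

lemma applyCycle_getElem {l : List ℕ} (hnd : l.Nodup) (j : ℕ) (hj : j < l.length)
    (hj2 : (j+1) % l.length < l.length) :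
    applyCycle l l[j] = l[(j+1) % l.length] := by
  unfold applyCycle
  rw [if_pos (List.getElem_mem hj), hnd.idxOf_getElem j hj,
    List.getD_eq_getElem _ _ hj2]

lemma applyCycle_mem {c : List ℕ} {x : ℕ} (hx : x ∈ c) : applyCycle c x ∈ c := by
  unfold applyCycle
  rw [if_pos hx, List.getD_eq_getElem _ _ (Nat.mod_lt _ (by
    rcases c with _ | ⟨a, c⟩
    · simp at hx
    · simp))]
  exact List.getElem_mem _

lemma f3_spec_top {n : ℕ} {w : ℕ → ℕ} (hn : 1 ≤ n) (hw : IsWord n w) :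
    (f3Cycles n w).flatten.Perm (List.range' 1 n) ∧ GoodChain (f3Cycles n w) := by
  have hr : List.range' 1 n = 1 :: List.range' 2 (n-1) := by
    obtain ⟨m, rfl⟩ : ∃ m, n = m + 1 := ⟨n - 1, by omega⟩
    rw [List.range'_succ]
    simp
  obtain ⟨h1, h2⟩ := f3Go_spec w n 1 [] (List.range' 2 (n-1)) hn
    (List.pairwise_lt_range' (s := 2) (n := n-1)) (by simp) (by rw [← List.singleton_append] at hr; rw [← hr]; exact List.nodup_range' (s := 1) (n := n))
    (by
      intro x hx
      simp only [List.nil_append, List.mem_range'] at hx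
      omega)
    (fun j h2 hj => hw j (by omega) hj)
  exact ⟨by rw [hr]; simpa [f3Cycles] using h1, h2⟩

lemma applyCycles_mem_join {cs : List (List ℕ)} {x : ℕ} (hnd : cs.flatten.Nodup)
    (hx : x ∈ cs.flatten) : applyCycles cs x ∈ cs.flatten := by
  obtain ⟨c, hc, hxc⟩ := List.mem_flatten.mp hx
  rw [applyCycles_eq_of_mem hnd hc hxc]
  exact List.mem_flatten.mpr ⟨c, hc, applyCycle_mem hxc⟩

lemma nodup_of_mem_join : ∀ {cs : List (List ℕ)}, cs.flatten.Nodup → ∀ {c}, c ∈ cs → c.Nodup := by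
  intro cs
  induction cs with
  | nil => intro _ c hc; simp at hc
  | cons c₀ rest ih =>
    intro hnd c hc
    rcases List.mem_cons.mp hc with rfl | hc'
    · exact List.Nodup.of_append_left (by simpa using hnd)
    · exact ih (List.Nodup.of_append_right (by simpa using hnd)) hc'

lemma applyCycles_surj {cs : List (List ℕ)} (hnd : cs.flatten.Nodup) :
    ∀ y ∈ cs.flatten, ∃ x ∈ cs.flatten, applyCycles cs x = y := by
  intro y hy
  obtain ⟨l, hc, hyc⟩ := List.mem_flatten.mp hy
  obtain ⟨i, hi, rfl⟩ := List.getElem_of_mem hyc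
  have hk : 0 < l.length := by omega
  have hcnd : l.Nodup := nodup_of_mem_join hnd hc
  refine ⟨l[(i + l.length - 1) % l.length]'(Nat.mod_lt _ hk), List.mem_flatten.mpr ⟨l, hc, List.getElem_mem _⟩, ?_⟩
  rw [applyCycles_eq_of_mem hnd hc (List.getElem_mem _)]
  rw [applyCycle_getElem hcnd _ (Nat.mod_lt _ hk) (Nat.mod_lt _ hk)]
  congr 1
  rw [Nat.mod_add_mod]
  have h5 : i + l.length - 1 + 1 = i + l.length := by omega
  rw [h5, Nat.add_mod_right, Nat.mod_eq_of_lt hi]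

lemma f3_perm {n : ℕ} {w : ℕ → ℕ} (hw : IsWord n w) : IsPermList n (f3OneLine n w) := by
  rcases Nat.eq_zero_or_pos n with rfl | hn
  · simp [IsPermList, f3OneLine]
  obtain ⟨hjoin, hgood⟩ := f3_spec_top hn hw
  have hnd : (f3Cycles n w).flatten.Nodup := hjoin.nodup_iff.mpr (List.nodup_range' (s := 1) (n := n))
  set σ := applyCycles (f3Cycles n w) with hσ
  set l := List.range' 1 n with hl
  have hsub : l ⊆ l.map σ := by
    intro y hy
    obtain ⟨x, hx, hσx⟩ := applyCycles_surj hnd y (hjoin.mem_iff.mpr hy)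
    exact List.mem_map.mpr ⟨x, hjoin.mem_iff.mp hx, hσx⟩
  have hsp : l.Subperm (l.map σ) := List.subperm_of_subset (List.nodup_range' (s := 1) (n := n)) hsub
  have : l.Perm (l.map σ) := hsp.perm_of_length_le (by simp)
  exact this.symm

lemma iter1 {l : List ℕ} (hnd : l.Nodup) (σ : ℕ → ℕ)
    (hσ : ∀ x ∈ l, σ x = applyCycle l x) (h0 : 0 < l.length) :
    (∀ j, (hj : j < l.length) → σ^[j] (l[0]'h0) = l[j]) ∧
    σ^[l.length] (l[0]'h0) = l[0]'h0 := by
  have key : ∀ j, (hj : j < l.length) → σ^[j] (l[0]'h0) = l[j] := by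
    intro j
    induction j with
    | zero => intro hj; simp
    | succ j ihj =>
      intro hj
      rw [Function.iterate_succ_apply', ihj (by omega), hσ _ (List.getElem_mem _),
        applyCycle_getElem hnd j (by omega) (Nat.mod_lt _ (by omega))]
      have hmod : (j + 1) % l.length = j + 1 := Nat.mod_eq_of_lt hj
      simp only [hmod]
  refine ⟨key, ?_⟩
  obtain ⟨m, hm⟩ : ∃ m, l.length = m + 1 := ⟨l.length - 1, by omega⟩
  rw [hm, Function.iterate_succ_apply', key m (by omega), hσ _ (List.getElem_mem _),
    applyCycle_getElem hnd m (by omega) (Nat.mod_lt _ (by omega))]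
  have hmod : (m + 1) % l.length = 0 := by rw [hm]; simp
  simp only [hmod]

lemma cycle_unique {l l' : List ℕ} (hnd : l.Nodup) (hnd' : l'.Nodup) (σ : ℕ → ℕ)
    (hσ : ∀ x ∈ l, σ x = applyCycle l x) (hσ' : ∀ x ∈ l', σ x = applyCycle l' x)
    (h0 : 0 < l.length) (h0' : 0 < l'.length) (hh : l[0]'h0 = l'[0]'h0') : l = l' := by
  obtain ⟨k1, k2⟩ := iter1 hnd σ hσ h0
  obtain ⟨k1', k2'⟩ := iter1 hnd' σ hσ' h0'
  have hlen : l.length = l'.length := by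
    by_contra hne
    rcases Nat.lt_or_ge l.length l'.length with hlt | hge
    · have h1 := k1' l.length hlt
      rw [← hh, k2] at h1
      have h00 : l'[l.length]'hlt = l'[0]'h0' := by rw [← h1, hh]
      have := (List.Nodup.getElem_inj_iff hnd').mp h00
      omega
    · have hlt : l'.length < l.length := by omega
      have h1 := k1 l'.length hlt
      rw [hh, k2'] at h1
      have h00 : l[l'.length]'hlt = l[0]'h0 := by rw [← h1, ← hh]
      have := (List.Nodup.getElem_inj_iff hnd).mp h00
      omega
  apply List.ext_getElem hlen
  intro j hj hj'
  rw [← k1 j hj, ← k1' j hj', hh]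

lemma goodchain_nil {cs : List (List ℕ)} (hg : GoodChain cs) (hj : cs.flatten = []) : cs = [] := by
  cases cs with
  | nil => rfl
  | cons c rest =>
    obtain ⟨⟨h, t, rfl, _⟩, _⟩ := hg
    simp at hj

lemma recov : ∀ cs cs' : List (List ℕ), GoodChain cs → GoodChain cs' →
    cs.flatten.Nodup → cs'.flatten.Nodup → cs.flatten.Perm cs'.flatten →
    (∀ x ∈ cs.flatten, applyCycles cs x = applyCycles cs' x) → cs = cs' := by
  intro cs
  induction cs with
  | nil =>
    intro cs' _ hg' _ _ hperm _
    exact (goodchain_nil hg' (hperm.symm.eq_nil ▸ rfl)).symm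
  | cons c rest ih =>
    intro cs' hg hg' hnd hnd' hperm hagree
    obtain ⟨⟨h, t, rfl, hlt⟩, hgrest⟩ := hg
    cases cs' with
    | nil =>
      exfalso
      have : h ∈ ((h::t) :: rest).flatten := by simp
      have := hperm.mem_iff.mp this
      simp at this
    | cons c' rest' =>
      obtain ⟨⟨h', t', rfl, hlt'⟩, hgrest'⟩ := hg'
      -- heads are equal
      have hmem : h ∈ ((h'::t') :: rest').flatten := hperm.mem_iff.mp (by simp)
      have hmem' : h' ∈ ((h::t) :: rest).flatten := hperm.mem_iff.mpr (by simp)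
      have hmem2 : h = h' ∨ h ∈ t' ++ rest'.flatten := by
        simp only [List.flatten_cons, List.cons_append, List.mem_cons, List.mem_append] at hmem ⊢
        tauto
      have hmem2' : h' = h ∨ h' ∈ t ++ rest.flatten := by
        simp only [List.flatten_cons, List.cons_append, List.mem_cons, List.mem_append] at hmem' ⊢
        tauto
      have hh : h = h' := by
        rcases hmem2 with rfl | hm
        · rfl
        · have hb := hlt' h hm
          rcases hmem2' with rfl | hm'
          · rfl
          · have := hlt h' hm'; omega
      subst hh
      set σ := applyCycles ((h::t)::rest) with hσdef
      have hndc : (h::t).Nodup := nodup_of_mem_join hnd (by simp)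
      have hndc' : (h::t').Nodup := nodup_of_mem_join hnd' (by simp)
      have hσ : ∀ x ∈ (h::t), σ x = applyCycle (h::t) x :=
        fun x hx => applyCycles_cons_of_mem _ hx
      have hσ' : ∀ x ∈ (h::t'), σ x = applyCycle (h::t') x := by
        intro x hx
        have hxj' : x ∈ ((h::t')::rest').flatten := by
          simp only [List.flatten_cons, List.mem_append]; exact Or.inl hx
        have hxj : x ∈ ((h::t)::rest).flatten := hperm.mem_iff.mpr hxj'
        rw [hagree x hxj, applyCycles_cons_of_mem _ hx]
      have hc : (h::t) = (h::t') :=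
        cycle_unique hndc hndc' σ hσ hσ' (by simp) (by simp) (by simp)
      obtain rfl : t = t' := by injection hc
      -- recurse on rests
      have hprr : rest.flatten.Perm rest'.flatten := by
        have hp2 : ((h::t) ++ rest.flatten).Perm ((h::t) ++ rest'.flatten) := by
          simpa using hperm
        exact (List.perm_append_left_iff _).mp hp2
      have hdisj := List.disjoint_of_nodup_append (by simpa using hnd : ((h::t) ++ rest.flatten).Nodup)
      have hdisj' := List.disjoint_of_nodup_append (by simpa using hnd' : ((h::t) ++ rest'.flatten).Nodup)
      have hrr : rest = rest' := by
        refine ih rest' hgrest hgrest'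
          (List.Nodup.of_append_right (by simpa using hnd : ((h::t) ++ rest.flatten).Nodup))
          (List.Nodup.of_append_right (by simpa using hnd' : ((h::t) ++ rest'.flatten).Nodup))
          hprr ?_
        intro x hx
        have hxc : x ∉ (h::t) := fun hc => hdisj hc hx
        have hxc' : x ∉ (h::t) := fun hc => hdisj' hc (hprr.mem_iff.mp hx)
        calc applyCycles rest x
            = applyCycles ((h::t)::rest) x := (applyCycles_cons_of_not_mem _ hxc).symm
          _ = applyCycles ((h::t)::rest') x := by
              refine hagree x ?_
              simp only [List.flatten_cons, List.mem_append]
              exact Or.inr hx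
          _ = applyCycles rest' x := applyCycles_cons_of_not_mem _ hxc'
      rw [hrr]

lemma f3Go_inj (w v : ℕ → ℕ) : ∀ i cur avail, avail.Nodup → avail.length = i - 1 →
    (∀ j, 2 ≤ j → j ≤ i → 1 ≤ w j ∧ w j ≤ j) →
    (∀ j, 2 ≤ j → j ≤ i → 1 ≤ v j ∧ v j ≤ j) →
    f3Go w i [] cur avail = f3Go v i [] cur avail →
    ∀ j, 2 ≤ j → j ≤ i → w j = v j := by
  intro i
  induction i using Nat.strong_induction_on with
  | _ i ih =>
    match i with
    | 0 => intro cur avail _ _ _ _ _ j h2 hj; omega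
    | 1 => intro cur avail _ _ _ _ _ j h2 hj; omega
    | i+2 =>
      intro cur avail hnd hlen hw hv heq j h2 hj
      rw [f3Go, f3Go] at heq
      by_cases hfw : w (i+2) = 1 <;> by_cases hfv : v (i+2) = 1
      · rw [if_pos hfw, if_pos hfv] at heq
        simp only [List.nil_append] at heq
        rw [f3Go_acc w, f3Go_acc v] at heq
        have heq2 := List.append_cancel_left heq
        rcases eq_or_lt_of_le hj with rfl | hjlt
        · rw [hfw, hfv]
        · exact ih (i+1) (by omega) _ _ (hnd.tail) (by simp [List.length_tail]; omega)
            (fun j h2 hj => hw j h2 (by omega)) (fun j h2 hj => hv j h2 (by omega))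
            heq2 j h2 (by omega)
      · exfalso
        rw [if_pos hfw, if_neg hfv] at heq
        simp only [List.nil_append] at heq
        rw [f3Go_acc w] at heq
        obtain ⟨t, rest, hr⟩ := f3Go_head v (i+1)
          (cur ++ [avail.getD (v (i + 2) - 2) 0]) (avail.erase (avail.getD (v (i + 2) - 2) 0))
        rw [hr] at heq
        have hL := congrArg (fun L => (L.headD []).length) heq
        simp only [List.singleton_append, List.headD_cons, List.length_append,
          List.length_cons] at hL
        omega
      · exfalso
        rw [if_neg hfw, if_pos hfv] at heq
        simp only [List.nil_append] at heq
        rw [f3Go_acc v] at heq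
        obtain ⟨t, rest, hr⟩ := f3Go_head w (i+1)
          (cur ++ [avail.getD (w (i + 2) - 2) 0]) (avail.erase (avail.getD (w (i + 2) - 2) 0))
        rw [hr] at heq
        have hL := congrArg (fun L => (L.headD []).length) heq
        simp only [List.singleton_append, List.headD_cons, List.length_append,
          List.length_cons] at hL
        omega
      · rw [if_neg hfw, if_neg hfv] at heq
        have hwb := hw (i+2) (by omega) (le_refl _)
        have hvb := hv (i+2) (by omega) (le_refl _)
        have hia : w (i+2) - 2 < avail.length := by omega
        have hib : v (i+2) - 2 < avail.length := by omega
        set x := avail.getD (w (i + 2) - 2) 0 with hx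
        set y := avail.getD (v (i + 2) - 2) 0 with hy
        have hxy : x = y := by
          obtain ⟨t, rest, hr⟩ := f3Go_head w (i+1) (cur ++ [x]) (avail.erase x)
          obtain ⟨t', rest', hr'⟩ := f3Go_head v (i+1) (cur ++ [y]) (avail.erase y)
          rw [hr, hr'] at heq
          have h1 : cur ++ [x] ++ t = cur ++ [y] ++ t' := (List.cons_eq_cons.mp heq).1
          have h1' : cur ++ ([x] ++ t) = cur ++ ([y] ++ t') := by
            simpa [List.append_assoc] using h1
          have hcc := List.append_cancel_left h1'
          exact (List.cons_eq_cons.mp hcc).1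
        have hww : w (i+2) = v (i+2) := by
          rw [hx, List.getD_eq_getElem _ _ hia, hy, List.getD_eq_getElem _ _ hib] at hxy
          have := (List.Nodup.getElem_inj_iff hnd).mp hxy
          omega
        rcases eq_or_lt_of_le hj with rfl | hjlt
        · exact hww
        · rw [← hxy] at heq
          have hxm : x ∈ avail := by
            rw [hx, List.getD_eq_getElem _ _ hia]; exact List.getElem_mem _
          exact ih (i+1) (by omega) (cur ++ [x]) (avail.erase x) (hnd.erase x)
            (by rw [List.length_erase_of_mem hxm]; omega)
            (fun j h2 hj => hw j h2 (by omega)) (fun j h2 hj => hv j h2 (by omega))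
            heq j h2 (by omega)

lemma f3_inj {n : ℕ} {w v : ℕ → ℕ} (hw : IsWord n w) (hv : IsWord n v)
    (heq : f3OneLine n w = f3OneLine n v) : ∀ i, 1 ≤ i → i ≤ n → w i = v i := by
  intro i h1 hin
  have hn : 1 ≤ n := le_trans h1 hin
  obtain ⟨hjw, hgw⟩ := f3_spec_top hn hw
  obtain ⟨hjv, hgv⟩ := f3_spec_top hn hv
  have hndw : (f3Cycles n w).flatten.Nodup := hjw.nodup_iff.mpr (List.nodup_range' (s := 1) (n := n))
  have hndv : (f3Cycles n v).flatten.Nodup := hjv.nodup_iff.mpr (List.nodup_range' (s := 1) (n := n))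
  have hagree : ∀ x ∈ (f3Cycles n w).flatten,
      applyCycles (f3Cycles n w) x = applyCycles (f3Cycles n v) x := by
    intro x hx
    exact List.map_inj_left.mp heq x (hjw.mem_iff.mp hx)
  have hcyc : f3Cycles n w = f3Cycles n v :=
    recov _ _ hgw hgv hndw hndv (hjw.trans hjv.symm) hagree
  rcases eq_or_lt_of_le h1 with rfl | h2
  · have b1 := hw 1 (le_refl _) hin
    have b2 := hv 1 (le_refl _) hin
    omega
  · exact f3Go_inj w v n [1] (List.range' 2 (n-1)) (List.nodup_range' (s := 2) (n := n-1))
      (by simp) (fun j ha hb => hw j (by omega) hb) (fun j ha hb => hv j (by omega) hb)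
      hcyc i h2 hin

def toW (n : ℕ) (f : ∀ i : Fin n, Fin (i.val + 1)) : ℕ → ℕ :=
  fun i => if h : 1 ≤ i ∧ i ≤ n then (f ⟨i - 1, by omega⟩).val + 1 else 1

lemma toW_isWord (n : ℕ) (f : ∀ i : Fin n, Fin (i.val + 1)) : IsWord n (toW n f) := by
  intro i h1 hn
  unfold toW
  rw [dif_pos ⟨h1, hn⟩]
  have := (f ⟨i - 1, by omega⟩).isLt
  simp only at this
  omega

lemma toW_inj {n : ℕ} {f g : ∀ i : Fin n, Fin (i.val + 1)}
    (h : ∀ i, 1 ≤ i → i ≤ n → toW n f i = toW n g i) : f = g := by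
  funext i
  have h1 : 1 ≤ i.val + 1 := by omega
  have h2 : i.val + 1 ≤ n := by omega
  have := h (i.val + 1) h1 h2
  unfold toW at this
  rw [dif_pos ⟨h1, h2⟩, dif_pos ⟨h1, h2⟩] at this
  have heq : (⟨i.val + 1 - 1, by omega⟩ : Fin n) = i := by
    apply Fin.ext; simp
  rw [heq] at this
  exact Fin.ext (by omega)

lemma prod_fin_succ (n : ℕ) : ∏ i : Fin n, (i.val + 1) = Nat.factorial n := by
  induction n with
  | zero => simp
  | succ m ih => rw [Fin.prod_univ_castSucc]; simp [ih, Nat.factorial_succ]; ring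

lemma f3_surj {n : ℕ} {l : List ℕ} (hl : IsPermList n l) :
    ∃ w, IsWord n w ∧ f3OneLine n w = l := by
  classical
  set F : (∀ i : Fin n, Fin (i.val + 1)) → List ℕ := fun f => f3OneLine n (toW n f) with hF
  have hFinj : Function.Injective F := by
    intro f g hfg
    exact toW_inj (f3_inj (toW_isWord n f) (toW_isWord n g) hfg)
  set perms : Finset (List ℕ) := ((List.range' 1 n).permutations).toFinset with hperms
  have hsub : Finset.univ.image F ⊆ perms := by
    intro l' hl'
    obtain ⟨f, _, rfl⟩ := Finset.mem_image.mp hl'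
    rw [hperms, List.mem_toFinset, List.mem_permutations]
    exact f3_perm (toW_isWord n f)
  have hcard1 : (Finset.univ.image F).card = Nat.factorial n := by
    rw [Finset.card_image_of_injective _ hFinj, Finset.card_univ, Fintype.card_pi]
    simp only [Fintype.card_fin]
    exact prod_fin_succ n
  have hcard2 : perms.card = Nat.factorial n := by
    rw [hperms, List.toFinset_card_of_nodup (List.nodup_permutations _ (List.nodup_range' (s := 1) (n := n))),
      List.length_permutations]
    simp
  have himg : Finset.univ.image F = perms :=
    Finset.eq_of_subset_of_card_le hsub (by omega)
  have hlmem : l ∈ perms := by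
    rw [hperms, List.mem_toFinset, List.mem_permutations]; exact hl
  rw [← himg] at hlmem
  obtain ⟨f, _, hfl⟩ := Finset.mem_image.mp hlmem
  exact ⟨toW n f, toW_isWord n f, hfl⟩


/-- `f₃ : W_n → S_n` (cycle notation, converted to one-line notation) is a bijection. -/
theorem f3_bijection (n : ℕ) :
    (∀ w, IsWord n w → IsPermList n (f3OneLine n w)) ∧
    (∀ w v, IsWord n w → IsWord n v → f3OneLine n w = f3OneLine n v →
      ∀ i, 1 ≤ i → i ≤ n → w i = v i) ∧
    (∀ l, IsPermList n l → ∃ w, IsWord n w ∧ f3OneLine n w = l) :=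
  ⟨fun _ hw => f3_perm hw, fun _ _ hw hv heq => f3_inj hw hv heq, fun _ hl => f3_surj hl⟩
end

section
/- For every σ ∈ S_n, the i-th letter of f₁⁻¹(σ) equals the position of i counted from the right among the entries 1,…,i of σ: formally, f₁⁻¹(σ)[i] = #{ j : σ[j] ≤ i and j ≥ pos_σ(i) }, where pos_σ(i) is the position of i in the one-line notation of σ. -/

lemma my_filter_erase (p : ℕ → Bool) (b : ℕ) (hpb : p b = false) :
    ∀ l : List ℕ, (l.erase b).filter p = l.filter p := by
  intro l
  induction l with
  | nil => simp
  | cons a t ih =>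
    by_cases hab : a = b
    · subst hab
      simp [List.erase_cons_head, List.filter_cons, hpb]
    · rw [List.erase_cons_tail (by simpa using hab), List.filter_cons, List.filter_cons, ih]

lemma my_drop_filter_erase (p : ℕ → Bool) (b : ℕ) (hpb : p b = false) :
    ∀ (l : List ℕ) (x : ℕ), x ∈ l → p x = true →
      (((l.erase b).drop ((l.erase b).idxOf x)).filter p)
        = ((l.drop (l.idxOf x)).filter p) := by
  intro l
  induction l with
  | nil => simp
  | cons a t ih =>
    intro x hx hpx
    have hxb : x ≠ b := by rintro rfl; rw [hpb] at hpx; cases hpx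
    by_cases hab : a = b
    · subst hab
      have hxt : x ∈ t := by
        rcases List.mem_cons.mp hx with h | h
        · exact absurd h hxb
        · exact h
      rw [List.erase_cons_head, List.idxOf_cons_ne _ (Ne.symm hxb), Nat.succ_eq_add_one,
        List.drop_succ_cons]
    · rw [List.erase_cons_tail (by simpa using hab)]
      by_cases hax : a = x
      · subst hax
        rw [List.idxOf_cons_self, List.idxOf_cons_self, List.drop_zero, List.drop_zero,
          List.filter_cons, List.filter_cons, my_filter_erase p b hpb]
      · have hxt : x ∈ t := by
          rcases List.mem_cons.mp hx with h | h
          · exact absurd h.symm hax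
          · exact h
        rw [List.idxOf_cons_ne _ hax, List.idxOf_cons_ne _ hax, Nat.succ_eq_add_one,
          List.drop_succ_cons, List.drop_succ_cons]
        exact ih x hxt hpx

lemma my_insertIdx_erase : ∀ (l : List ℕ) (x : ℕ), x ∈ l →
    (l.erase x).insertIdx (l.idxOf x) x = l := by
  intro l
  induction l with
  | nil => simp
  | cons a t ih =>
    intro x hx
    by_cases hax : a = x
    · subst hax
      rw [List.erase_cons_head, List.idxOf_cons_self]
      rfl
    · have hxt : x ∈ t := by
        rcases List.mem_cons.mp hx with h | h
        · exact absurd h.symm hax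
        · exact h
      rw [List.erase_cons_tail (by simpa using hax),
        List.idxOf_cons_ne _ hax, Nat.succ_eq_add_one,
        List.insertIdx_succ_cons, ih x hxt]

lemma my_f1List_succ (n : ℕ) (w : ℕ → ℕ) :
    f1List (n + 1) w = (f1List n w).insertIdx (n + 1 - w (n + 1)) (n + 1) := by
  simp [f1List, List.range_succ]

lemma my_f1List_congr : ∀ (n : ℕ) (w w' : ℕ → ℕ), (∀ i, 1 ≤ i → i ≤ n → w i = w' i) →
    f1List n w = f1List n w' := by
  intro n
  induction n with
  | zero => intro w w' _; rfl
  | succ n ih =>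
    intro w w' h
    rw [my_f1List_succ, my_f1List_succ, h (n + 1) (Nat.le_add_left 1 n) le_rfl,
      ih w w' (fun i h1 h2 => h i h1 (h2.trans (Nat.le_succ n)))]

lemma my_main : ∀ (n : ℕ) (σ : List ℕ), σ.Perm (List.range' 1 n) →
    f1List n (fun i =>
      ((σ.drop (σ.idxOf i)).filter (fun x => decide (x ≤ i))).length) = σ := by
  intro n
  induction n with
  | zero =>
    intro σ hσ
    simp at hσ
    simp [hσ, f1List]
  | succ n ih =>
    intro σ hσ
    have hlen : σ.length = n + 1 := by simpa using hσ.length_eq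
    have hmem : n + 1 ∈ σ := hσ.mem_iff.mpr (List.mem_range'_1.mpr ⟨Nat.le_add_left 1 n, by omega⟩)
    have hidx : σ.idxOf (n + 1) < n + 1 := by
      have h := List.idxOf_lt_length_iff.mpr hmem
      rwa [hlen] at h
    have hr : List.range' 1 (n + 1) = List.range' 1 n ++ [n + 1] := by
      rw [List.range'_concat, Nat.one_mul, Nat.add_comm]
    have hσ' : (σ.erase (n + 1)).Perm (List.range' 1 n) := by
      have h := hσ.erase (n + 1)
      rwa [hr, List.erase_append_right _
          (by intro h'; have := List.mem_range'_1.mp h'; omega),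
        List.erase_cons_head, List.append_nil] at h
    -- top letter
    have htop : ((σ.drop (σ.idxOf (n + 1))).filter (fun x => decide (x ≤ n + 1))).length
        = n + 1 - σ.idxOf (n + 1) := by
      rw [List.filter_eq_self.mpr, List.length_drop, hlen]
      intro a ha
      have : a ∈ σ := (List.drop_sublist _ _).mem ha
      have := List.mem_range'_1.mp (hσ.mem_iff.mp this)
      simp; omega
    rw [my_f1List_succ, htop]
    have hsub : n + 1 - (n + 1 - σ.idxOf (n + 1)) = σ.idxOf (n + 1) := by omega
    rw [hsub]
    have hagree : ∀ i, 1 ≤ i → i ≤ n →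
        ((σ.drop (σ.idxOf i)).filter (fun x => decide (x ≤ i))).length
          = (((σ.erase (n + 1)).drop ((σ.erase (n + 1)).idxOf i)).filter
              (fun x => decide (x ≤ i))).length := by
      intro i h1 h2
      rw [my_drop_filter_erase (fun x => decide (x ≤ i)) (n + 1) (by simp; omega) σ i
        (hσ.mem_iff.mpr (List.mem_range'_1.mpr ⟨h1, by omega⟩)) (by simp)]
    rw [my_f1List_congr n _ _ hagree, ih _ hσ', my_insertIdx_erase σ (n + 1) hmem]

/-- Explicit inverse of `f₁`: the `i`-th letter of `f₁⁻¹ σ` is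
`#{ j : σ[j] ≤ i ∧ j ≥ pos_σ(i) }`, the position of `i` from the right among the
entries `1,…,i` of `σ`; this word lies in `W_n` and `f₁` maps it back to `σ`. -/
theorem f1_inv_formula (n : ℕ) (σ : List ℕ) (hσ : IsPermList n σ) :
    IsWord n (fun i =>
      ((σ.drop (σ.idxOf i)).filter (fun x => decide (x ≤ i))).length) ∧
    f1List n (fun i =>
      ((σ.drop (σ.idxOf i)).filter (fun x => decide (x ≤ i))).length) = σ := by
  unfold IsPermList at hσ
  constructor
  · intro i h1 h2
    have hmem : i ∈ σ := hσ.mem_iff.mpr (List.mem_range'_1.mpr ⟨h1, by omega⟩)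
    have hidx : σ.idxOf i < σ.length := List.idxOf_lt_length_iff.mpr hmem
    constructor
    · -- nonempty: i is in the drop and passes the filter
      have hi : i ∈ σ.drop (σ.idxOf i) := by
        have h0 : 0 < (σ.drop (σ.idxOf i)).length := by
          rw [List.length_drop]; omega
        refine List.mem_iff_getElem.mpr ⟨0, h0, ?_⟩
        rw [List.getElem_drop]
        simp [List.getElem_idxOf hidx]
      have : i ∈ (σ.drop (σ.idxOf i)).filter (fun x => decide (x ≤ i)) :=
        List.mem_filter.mpr ⟨hi, by simp⟩
      exact List.length_pos_iff.mpr (List.ne_nil_of_mem this)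
    · -- at most i
      have h1' : ((σ.drop (σ.idxOf i)).filter (fun x => decide (x ≤ i))).length
          ≤ (σ.filter (fun x => decide (x ≤ i))).length :=
        ((List.drop_sublist _ _).filter _).length_le
      have h2' : (σ.filter (fun x => decide (x ≤ i))).length
          = ((List.range' 1 n).filter (fun x => decide (x ≤ i))).length :=
        (hσ.filter _).length_eq
      have h3' : ((List.range' 1 n).filter (fun x => decide (x ≤ i))).length = i := by
        have hsplit : List.range' 1 n = List.range' 1 i ++ List.range' (1 + i) (n - i) := by
          have h := List.range'_append (s := 1) (m := i) (n := n - i) (step := 1)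
          simp only [one_mul] at h
          have hni : i + (n - i) = n := by omega
          rw [hni] at h
          exact h.symm
        rw [hsplit, List.filter_append]
        rw [List.filter_eq_self.mpr (by intro a ha; have := List.mem_range'_1.mp ha; simp; omega),
          List.filter_eq_nil_iff.mpr (by intro a ha; have := List.mem_range'_1.mp ha; simp; omega)]
        simp
      exact h1'.trans (le_of_eq (h2'.trans h3'))
  · exact my_main n σ hσ
end

section
/- The number of cycles (in cycle-type sense) of the permutation f₃(w) equals the number of indices i ∈ {1,…,n} with w[i] = 1; the same holds for f₄(w). In particular, f₃(w) and f₄(w) always have the same number of cycles. -/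
lemma orbit_self (σ : ℕ → ℕ) (x : ℕ) : x ∈ orbitOf σ x := ⟨0, rfl⟩

lemma orbit_apply {σ : ℕ → ℕ} {x y : ℕ} (h : y ∈ orbitOf σ x) : σ y ∈ orbitOf σ x := by
  obtain ⟨m, rfl⟩ := h
  exact ⟨m + 1, Function.iterate_succ_apply' σ m x⟩

lemma orbit_subset_of_mem {σ : ℕ → ℕ} {x y : ℕ} (h : y ∈ orbitOf σ x) :
    orbitOf σ y ⊆ orbitOf σ x := by
  obtain ⟨m, rfl⟩ := h
  rintro z ⟨a, rfl⟩
  exact ⟨a + m, Function.iterate_add_apply ..⟩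

lemma orbit_subset {σ : ℕ → ℕ} {S : Set ℕ} (hm : Set.MapsTo σ S S) {x : ℕ} (hx : x ∈ S) :
    orbitOf σ x ⊆ S := by
  rintro z ⟨a, rfl⟩
  exact hm.iterate a hx

lemma exists_recurrence {σ : ℕ → ℕ} {S : Set ℕ} (hS : S.Finite) (hm : Set.MapsTo σ S S)
    (hi : Set.InjOn σ S) {x : ℕ} (hx : x ∈ S) : ∃ p, 0 < p ∧ σ^[p] x = x := by
  have : Finite S := hS
  obtain ⟨a, b, hab, he⟩ := Finite.exists_ne_map_eq_of_infinite
    (fun n : ℕ => (⟨σ^[n] x, hm.iterate n hx⟩ : S))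
  have he : σ^[a] x = σ^[b] x := congrArg Subtype.val he
  rcases hab.lt_or_gt with h | h
  · refine ⟨b - a, by omega, ?_⟩
    apply hi.iterate hm a
    · exact hm.iterate _ hx
    · exact hx
    · rw [← Function.iterate_add_apply, Nat.add_sub_cancel' h.le, ← he]
  · refine ⟨a - b, by omega, ?_⟩
    apply hi.iterate hm b
    · exact hm.iterate _ hx
    · exact hx
    · rw [← Function.iterate_add_apply, Nat.add_sub_cancel' h.le, he]

lemma orbit_eq_of_mem {σ : ℕ → ℕ} {S : Set ℕ} (hS : S.Finite) (hm : Set.MapsTo σ S S)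
    (hi : Set.InjOn σ S) {x y : ℕ} (hx : x ∈ S) (hy : y ∈ orbitOf σ x) :
    orbitOf σ y = orbitOf σ x := by
  refine subset_antisymm (orbit_subset_of_mem hy) (orbit_subset_of_mem ?_)
  obtain ⟨p, hp, hpx⟩ := exists_recurrence hS hm hi hx
  obtain ⟨a, rfl⟩ := hy
  refine ⟨a * p - a, ?_⟩
  rw [← Function.iterate_add_apply]
  have : a * p - a + a = a * p := by
    have : a ≤ a * p := Nat.le_mul_of_pos_right a hp
    omega
  rw [this, mul_comm, Function.iterate_mul]
  exact Function.iterate_fixed hpx a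

lemma orbit_fixed {σ : ℕ → ℕ} {x : ℕ} (h : σ x = x) : orbitOf σ x = {x} := by
  ext z
  constructor
  · rintro ⟨a, rfl⟩; exact Function.iterate_fixed h a
  · intro hz; rw [Set.mem_singleton_iff] at hz; subst hz; exact orbit_self ..

lemma numCycles_eq_image (n : ℕ) (σ : ℕ → ℕ) :
    numCycles n σ = (orbitOf σ '' Set.Icc 1 n).ncard := by
  unfold numCycles
  congr 1
  ext s
  simp only [Set.mem_image, Set.mem_Icc, Set.mem_setOf_eq]
  constructor
  · rintro ⟨x, h1, h2, rfl⟩; exact ⟨x, ⟨h1, h2⟩, rfl⟩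
  · rintro ⟨x, ⟨h1, h2⟩, rfl⟩; exact ⟨x, h1, h2, rfl⟩

lemma f4_gt (w : ℕ → ℕ) : ∀ m, IsWord m w → ∀ x, m < x → f4Fun w m x = x := by
  intro m
  induction m with
  | zero => intro _ x _; rfl
  | succ m ih =>
      intro hw x hx
      have hw1 := hw (m+1) (by omega) le_rfl
      have h2 : x ≠ w (m+1) - 1 := by omega
      have h3 : x ≠ m + 1 := by omega
      have ihx := ih (fun i a b => hw i a (by omega)) x (by omega)
      simp only [f4Fun, h2, h3, if_false, ihx]
      split_ifs <;> rfl

lemma icc_succ (m : ℕ) : Set.Icc 1 (m+1) = insert (m+1) (Set.Icc 1 m) := by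
  ext z; simp only [Set.mem_Icc, Set.mem_insert_iff]; omega

lemma f4_main (w : ℕ → ℕ) : ∀ m, IsWord m w →
    Set.MapsTo (f4Fun w m) (Set.Icc 1 m) (Set.Icc 1 m) ∧
    Set.InjOn (f4Fun w m) (Set.Icc 1 m) ∧
    numCycles m (f4Fun w m) =
      ((List.range' 1 m).filter (fun i => decide (w i = 1))).length := by
  intro m
  induction m with
  | zero =>
      intro _
      refine ⟨by simp [Set.MapsTo], by simp [Set.InjOn], ?_⟩
      rw [numCycles_eq_image]
      simp
  | succ m ih =>
      intro hw
      classical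
      obtain ⟨hmap, hinj, hcount⟩ := ih (fun i h1 h2 => hw i h1 (by omega))
      set σ := f4Fun w m with hσdef
      set σ' := f4Fun w (m+1) with hσ'def
      have hfilter : ((List.range' 1 (m+1)).filter (fun i => decide (w i = 1))).length =
          ((List.range' 1 m).filter (fun i => decide (w i = 1))).length
          + (if w (m+1) = 1 then 1 else 0) := by
        rw [List.range'_concat]
        have he : 1 + 1 * m = m + 1 := by ring
        rw [he, List.filter_append, List.length_append]
        by_cases h : w (m+1) = 1 <;> simp [h]
      by_cases h1 : w (m+1) = 1
      · -- σ' = σ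
        have f4eq : σ' = σ := by
          funext x; simp only [hσ'def, hσdef, f4Fun, h1, if_true]
        have hfix : σ (m+1) = m+1 := f4_gt w m (fun i a b => hw i a (by omega)) (m+1) (by omega)
        have hmap' : Set.MapsTo σ' (Set.Icc 1 (m+1)) (Set.Icc 1 (m+1)) := by
          rw [f4eq]
          intro x hx
          simp only [Set.mem_Icc] at hx ⊢
          by_cases hxm : x ≤ m
          · have := hmap (Set.mem_Icc.2 ⟨hx.1, hxm⟩); simp only [Set.mem_Icc] at this; omega
          · have hxe : x = m + 1 := by omega
            rw [hxe, hfix]; omega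
        have hinj' : Set.InjOn σ' (Set.Icc 1 (m+1)) := by
          rw [f4eq]
          intro x hx y hy hxy
          simp only [Set.mem_Icc] at hx hy
          by_cases hxm : x ≤ m <;> by_cases hym : y ≤ m
          · exact hinj (Set.mem_Icc.2 ⟨hx.1, hxm⟩) (Set.mem_Icc.2 ⟨hy.1, hym⟩) hxy
          · have hye : y = m+1 := by omega
            have : σ x ∈ Set.Icc 1 m := hmap (Set.mem_Icc.2 ⟨hx.1, hxm⟩)
            rw [hye, hfix] at hxy
            simp only [Set.mem_Icc] at this; omega
          · have hxe : x = m+1 := by omega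
            have : σ y ∈ Set.Icc 1 m := hmap (Set.mem_Icc.2 ⟨hy.1, hym⟩)
            rw [hxe, hfix] at hxy
            simp only [Set.mem_Icc] at this; omega
          · omega
        refine ⟨hmap', hinj', ?_⟩
        rw [numCycles_eq_image, f4eq, icc_succ, Set.image_insert_eq]
        rw [Set.ncard_insert_of_notMem ?_ ((Set.finite_Icc 1 m).image _)]
        · rw [← numCycles_eq_image, hcount, hfilter, if_pos h1]
        · rw [orbit_fixed hfix]
          rintro ⟨x, hx, he⟩
          have hxs : x ∈ orbitOf σ x := orbit_self σ x
          rw [he] at hxs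
          simp only [Set.mem_Icc] at hx
          simp only [Set.mem_singleton_iff] at hxs
          omega
      · -- insertion case
        have hw1 := hw (m+1) (by omega) le_rfl
        set c := w (m+1) - 1 with hcdef
        have hc1 : 1 ≤ c := by omega
        have hcm : c ≤ m := by omega
        have hcS : c ∈ Set.Icc 1 m := Set.mem_Icc.2 ⟨hc1, hcm⟩
        have hσ'c : σ' c = m + 1 := by
          simp only [hσ'def, f4Fun, h1, if_false, ← hcdef, if_pos rfl]
        have hσ'm1 : σ' (m+1) = σ c := by
          have : m + 1 ≠ c := by omega
          simp only [hσ'def, f4Fun, h1, if_false, ← hcdef, hσdef]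
          rw [if_neg this]
          simp
        have hσ'x : ∀ x, x ≠ c → x ≠ m + 1 → σ' x = σ x := by
          intro x hx1 hx2
          simp only [hσ'def, f4Fun, h1, if_false, ← hcdef, if_neg hx1, if_neg hx2, hσdef]
        have hmap' : Set.MapsTo σ' (Set.Icc 1 (m+1)) (Set.Icc 1 (m+1)) := by
          intro x hx
          simp only [Set.mem_Icc] at hx ⊢
          by_cases hx1 : x = c
          · rw [hx1, hσ'c]; omega
          · by_cases hx2 : x = m + 1
            · rw [hx2, hσ'm1]
              have := Set.mem_Icc.1 (hmap hcS); omega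
            · rw [hσ'x x hx1 hx2]
              have := Set.mem_Icc.1 (hmap (Set.mem_Icc.2 ⟨hx.1, by omega⟩)); omega
        have hval : ∀ x, x ∈ Set.Icc 1 (m+1) → x ≠ c → σ' x ∈ Set.Icc 1 m := by
          intro x hx hx1
          by_cases hx2 : x = m + 1
          · rw [hx2, hσ'm1]; exact hmap hcS
          · rw [hσ'x x hx1 hx2]
            simp only [Set.mem_Icc] at hx
            exact hmap (Set.mem_Icc.2 ⟨hx.1, by omega⟩)
        have hinj' : Set.InjOn σ' (Set.Icc 1 (m+1)) := by
          intro x hx y hy hxy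
          by_cases hx1 : x = c <;> by_cases hy1 : y = c
          · rw [hx1, hy1]
          · exfalso
            rw [hx1, hσ'c] at hxy
            have := Set.mem_Icc.1 (hval y hy hy1); omega
          · exfalso
            rw [hy1, hσ'c] at hxy
            have := Set.mem_Icc.1 (hval x hx hx1); omega
          · by_cases hx2 : x = m + 1 <;> by_cases hy2 : y = m + 1
            · rw [hx2, hy2]
            · exfalso
              rw [hx2, hσ'm1, hσ'x y hy1 hy2] at hxy
              have hyS : y ∈ Set.Icc 1 m := by
                simp only [Set.mem_Icc] at hy ⊢; omega
              exact hy1 (hinj hyS hcS hxy.symm)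
            · exfalso
              rw [hy2, hσ'm1, hσ'x x hx1 hx2] at hxy
              have hxS : x ∈ Set.Icc 1 m := by
                simp only [Set.mem_Icc] at hx ⊢; omega
              exact hx1 (hinj hxS hcS hxy)
            · rw [hσ'x x hx1 hx2, hσ'x y hy1 hy2] at hxy
              have hxS : x ∈ Set.Icc 1 m := by
                simp only [Set.mem_Icc] at hx ⊢; omega
              have hyS : y ∈ Set.Icc 1 m := by
                simp only [Set.mem_Icc] at hy ⊢; omega
              exact hinj hxS hyS hxy
        refine ⟨hmap', hinj', ?_⟩
        -- orbit analysis
        have hA1 : ∀ x ∈ Set.Icc 1 m, ∀ j, σ^[j] x ∈ orbitOf σ' x := by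
          intro x hx j
          induction j with
          | zero => exact orbit_self σ' x
          | succ j ihj =>
              rw [Function.iterate_succ_apply']
              have hyS : σ^[j] x ∈ Set.Icc 1 m := orbit_subset hmap hx ⟨j, rfl⟩
              by_cases hyc : σ^[j] x = c
              · have h2 : σ (σ^[j] x) = σ' (σ' (σ^[j] x)) := by
                  rw [hyc, hσ'c, hσ'm1]
                rw [h2]
                exact orbit_apply (orbit_apply ihj)
              · have h2 : σ (σ^[j] x) = σ' (σ^[j] x) := by
                  rw [hσ'x _ hyc (by have := Set.mem_Icc.1 hyS; omega)]
                rw [h2]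
                exact orbit_apply ihj
        have hA1' : ∀ x ∈ Set.Icc 1 m, orbitOf σ x ⊆ orbitOf σ' x := by
          rintro x hx z ⟨j, rfl⟩; exact hA1 x hx j
        have hA3 : ∀ x ∈ Set.Icc 1 m, ∀ j,
            σ'^[j] x ∈ orbitOf σ x ∪ {y | y = m + 1 ∧ c ∈ orbitOf σ x} := by
          intro x hx j
          induction j with
          | zero => exact Or.inl (orbit_self σ x)
          | succ j ihj =>
              rw [Function.iterate_succ_apply']
              rcases ihj with hy | hy
              · have hyS : σ'^[j] x ∈ Set.Icc 1 m := orbit_subset hmap hx hy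
                by_cases hyc : σ'^[j] x = c
                · rw [hyc, hσ'c]
                  right
                  exact ⟨rfl, hyc ▸ hy⟩
                · rw [hσ'x _ hyc (by have := Set.mem_Icc.1 hyS; omega)]
                  exact Or.inl (orbit_apply hy)
              · obtain ⟨hy1, hy2⟩ := hy
                rw [hy1, hσ'm1]
                exact Or.inl (orbit_apply hy2)
        have hG : ∀ x ∈ Set.Icc 1 m, orbitOf σ' x =
            (fun s => if c ∈ s then insert (m+1) s else s) (orbitOf σ x) := by
          intro x hx
          by_cases hc : c ∈ orbitOf σ x
          · simp only [if_pos hc]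
            apply subset_antisymm
            · rintro z ⟨j, rfl⟩
              rcases hA3 x hx j with h | h
              · exact Set.mem_insert_of_mem _ h
              · rw [h.1]; exact Set.mem_insert _ _
            · intro z hz
              rcases Set.mem_insert_iff.1 hz with rfl | hz
              · have hcmem : c ∈ orbitOf σ' x := hA1' x hx hc
                have := orbit_apply hcmem
                rwa [hσ'c] at this
              · exact hA1' x hx hz
          · simp only [if_neg hc]
            apply subset_antisymm
            · rintro z ⟨j, rfl⟩
              rcases hA3 x hx j with h | h
              · exact h
              · exact absurd h.2 hc
            · exact hA1' x hx
        have horbm1 : orbitOf σ' (m+1) = orbitOf σ' c := by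
          apply orbit_eq_of_mem (Set.finite_Icc 1 (m+1)) hmap' hinj'
            (Set.mem_Icc.2 ⟨by omega, by omega⟩)
          exact ⟨1, hσ'c⟩
        have hnotmem : ∀ s ∈ orbitOf σ '' Set.Icc 1 m, m + 1 ∉ s := by
          rintro s ⟨x, hx, rfl⟩ hmem
          have := Set.mem_Icc.1 (orbit_subset hmap hx hmem)
          omega
        have himg : orbitOf σ' '' Set.Icc 1 (m+1) =
            (fun s => if c ∈ s then insert (m+1) s else s) '' (orbitOf σ '' Set.Icc 1 m) := by
          apply subset_antisymm
          · rintro z ⟨x, hx, rfl⟩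
            by_cases hx2 : x = m + 1
            · rw [hx2, horbm1, hG c hcS]
              exact Set.mem_image_of_mem _ (Set.mem_image_of_mem _ hcS)
            · have hxS : x ∈ Set.Icc 1 m := by
                simp only [Set.mem_Icc] at hx ⊢; omega
              rw [hG x hxS]
              exact Set.mem_image_of_mem _ (Set.mem_image_of_mem _ hxS)
          · rintro z ⟨s, ⟨x, hx, rfl⟩, rfl⟩
            exact ⟨x, Set.mem_Icc.2 ⟨(Set.mem_Icc.1 hx).1, by have := (Set.mem_Icc.1 hx).2; omega⟩,
              hG x hx⟩
        have hGinj : Set.InjOn (fun s => if c ∈ s then insert (m+1) s else s)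
            (orbitOf σ '' Set.Icc 1 m) := by
          intro s hs t ht hst
          have hms := hnotmem s hs
          have hmt := hnotmem t ht
          simp only at hst
          split_ifs at hst with a1 a2 a3
          · have : s = insert (m+1) s \ {m+1} := by
              rw [Set.insert_diff_self_of_notMem hms]
            rw [this, hst, Set.insert_diff_self_of_notMem hmt]
          · exfalso; apply hmt; rw [← hst]; exact Set.mem_insert _ _
          · exfalso; apply hms; rw [hst]; exact Set.mem_insert _ _
          · exact hst
        rw [numCycles_eq_image, himg, Set.ncard_image_of_injOn hGinj, ← numCycles_eq_image,
          hcount, hfilter, if_neg h1]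
        omega

/-- Invariant for `f3Go`. -/
lemma f3Go_spec_s18 (w : ℕ → ℕ) : ∀ i (done : List (List ℕ)) (cur avail : List ℕ),
    avail.length = i - 1 →
    (∀ j, 2 ≤ j → j ≤ i → 1 ≤ w j ∧ w j ≤ j) →
    (∀ c ∈ done, c ≠ []) → cur ≠ [] →
    (f3Go w i done cur avail).length
      = done.length + 1 + ((List.range' 2 (i-1)).filter (fun j => decide (w j = 1))).length ∧
    (f3Go w i done cur avail).flatten.Perm (done.flatten ++ cur ++ avail) ∧
    (∀ c ∈ f3Go w i done cur avail, c ≠ []) := by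
  intro i
  induction i using Nat.strong_induction_on with
  | _ i ih =>
    match i with
    | 0 =>
        intro done cur avail hlen hw hdone hcur
        refine ⟨by simp [f3Go], ?_, ?_⟩
        · have : avail = [] := List.length_eq_zero_iff.1 hlen
          subst this
          simp [f3Go]
        · intro c hc
          simp only [f3Go, List.mem_append, List.mem_singleton] at hc
          rcases hc with h | h
          · exact hdone c h
          · rw [h]; exact hcur
    | 1 =>
        intro done cur avail hlen hw hdone hcur
        refine ⟨by simp [f3Go], ?_, ?_⟩
        · have : avail = [] := List.length_eq_zero_iff.1 hlen
          subst this
          simp [f3Go]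
        · intro c hc
          simp only [f3Go, List.mem_append, List.mem_singleton] at hc
          rcases hc with h | h
          · exact hdone c h
          · rw [h]; exact hcur
    | (i + 2) =>
        intro done cur avail hlen hw hdone hcur
        have hfil : ((List.range' 2 (i+1)).filter (fun j => decide (w j = 1))).length
            = ((List.range' 2 i).filter (fun j => decide (w j = 1))).length
              + (if w (i+2) = 1 then 1 else 0) := by
          rw [List.range'_concat]
          have h2 : 2 + 1 * i = i + 2 := by ring
          rw [h2, List.filter_append, List.length_append]
          by_cases h : w (i+2) = 1 <;> simp [h]
        by_cases h1 : w (i + 2) = 1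
        · -- new cycle
          cases avail with
          | nil => simp at hlen
          | cons a t =>
              have hgo : f3Go w (i+2) done cur (a :: t) =
                  f3Go w (i+1) (done ++ [cur]) [a] t := by
                simp [f3Go, h1]
              have ht : t.length = (i+1) - 1 := by
                simp at hlen; omega
              obtain ⟨hl, hp, hn⟩ := ih (i+1) (by omega) (done ++ [cur]) [a] t ht
                (fun j a b => hw j a (by omega))
                (by intro c hc
                    rcases List.mem_append.1 hc with h | h
                    · exact hdone c h
                    · rw [List.mem_singleton.1 h]; exact hcur)
                (by simp)
              have e1 : List.range' 2 (i+1-1) = List.range' 2 i := by norm_num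
              have e2 : List.range' 2 (i+2-1) = List.range' 2 (i+1) := by norm_num
              refine ⟨?_, ?_, hgo ▸ hn⟩
              · rw [hgo, hl, e1, e2, hfil, if_pos h1]
                simp
                omega
              · rw [hgo]
                refine hp.trans ?_
                simp [List.flatten_append]
        · -- extend current cycle
          have hwk := hw (i+2) (by omega) le_rfl
          have hidx : w (i+2) - 2 < avail.length := by omega
          set x := avail.getD (w (i + 2) - 2) 0 with hxdef
          have hxmem : x ∈ avail := by
            rw [hxdef, List.getD_eq_getElem avail 0 hidx]
            exact List.getElem_mem hidx
          have hgo : f3Go w (i+2) done cur avail =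
              f3Go w (i+1) done (cur ++ [x]) (avail.erase x) := by
            simp only [f3Go, if_neg h1]; rfl
          have ht : (avail.erase x).length = (i+1) - 1 := by
            rw [List.length_erase_of_mem hxmem]; omega
          obtain ⟨hl, hp, hn⟩ := ih (i+1) (by omega) done (cur ++ [x]) (avail.erase x) ht
            (fun j a b => hw j a (by omega)) hdone (by simp)
          have e1 : List.range' 2 (i+1-1) = List.range' 2 i := by norm_num
          have e2 : List.range' 2 (i+2-1) = List.range' 2 (i+1) := by norm_num
          refine ⟨?_, ?_, hgo ▸ hn⟩
          · rw [hgo, hl, e1, e2, hfil, if_neg h1]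
            omega
          · rw [hgo]
            refine hp.trans ?_
            have hperm : (x :: avail.erase x).Perm avail := (List.perm_cons_erase hxmem).symm
            have heq : done.flatten ++ (cur ++ [x]) ++ avail.erase x
                = done.flatten ++ cur ++ (x :: avail.erase x) := by simp
            rw [heq]
            exact hperm.append_left _

lemma disjoint_of_nodup {cs : List (List ℕ)} (hnd : cs.flatten.Nodup) :
    ∀ c1 ∈ cs, ∀ c2 ∈ cs, ∀ y, y ∈ c1 → y ∈ c2 → c1 = c2 := by
  have hpw := (List.nodup_flatten.1 hnd).2
  intro c1 h1 c2 h2 y hy1 hy2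
  by_contra hne
  haveI : Std.Symm (α := List ℕ) List.Disjoint := ⟨fun _ _ h => h.symm⟩
  exact (List.Pairwise.forall hpw h1 h2 hne) hy1 hy2

lemma applyCycles_eq {cs : List (List ℕ)} (hnd : cs.flatten.Nodup) {c : List ℕ} {x : ℕ}
    (hc : c ∈ cs) (hx : x ∈ c) : applyCycles cs x = applyCycle c x := by
  unfold applyCycles
  cases hfind : cs.find? (fun c => c.contains x) with
  | none =>
      exfalso
      have := List.find?_eq_none.1 hfind c hc
      simp only [List.contains, Bool.not_eq_true, List.elem_eq_mem, decide_eq_false_iff_not] at this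
      exact this hx
  | some c' =>
      have h1 : x ∈ c' := by
        have := List.find?_some hfind
        simpa using this
      have h2 := List.mem_of_find?_eq_some hfind
      rw [disjoint_of_nodup hnd c' h2 c hc x h1 hx]

lemma applyCycles_iterate {cs : List (List ℕ)} (hnd : cs.flatten.Nodup) {c : List ℕ} {x : ℕ}
    (hc : c ∈ cs) (hx : x ∈ c) :
    ∀ j, (applyCycles cs)^[j] x = c.getD ((c.idxOf x + j) % c.length) 0 := by
  have hlen : 0 < c.length := List.length_pos_iff.2 (by rintro rfl; simp at hx)
  have hcnd : c.Nodup := (List.nodup_flatten.1 hnd).1 c hc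
  intro j
  induction j with
  | zero =>
      have hi : c.idxOf x < c.length := List.idxOf_lt_length_iff.2 hx
      rw [Nat.add_zero, Nat.mod_eq_of_lt hi, Function.iterate_zero_apply,
        List.getD_eq_getElem c 0 hi, List.getElem_idxOf hi]
  | succ j ihj =>
      rw [Function.iterate_succ_apply', ihj]
      have hm : (c.idxOf x + j) % c.length < c.length := Nat.mod_lt _ hlen
      have hmem : c.getD ((c.idxOf x + j) % c.length) 0 ∈ c := by
        rw [List.getD_eq_getElem c 0 hm]
        exact List.getElem_mem hm
      rw [applyCycles_eq hnd hc hmem]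
      unfold applyCycle
      rw [if_pos hmem]
      have hidx : c.idxOf (c.getD ((c.idxOf x + j) % c.length) 0)
          = (c.idxOf x + j) % c.length := by
        rw [List.getD_eq_getElem c 0 hm]
        exact List.Nodup.idxOf_getElem hcnd _ hm
      rw [hidx]
      have hm2 : ((c.idxOf x + j) % c.length + 1) % c.length < c.length := Nat.mod_lt _ hlen
      have hm3 : (c.idxOf x + (j + 1)) % c.length < c.length := Nat.mod_lt _ hlen
      rw [List.getD_eq_getElem c _ hm2, List.getD_eq_getElem c _ hm3]
      congr 1
      rw [Nat.mod_add_mod, Nat.add_assoc]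

lemma orbit_applyCycles {cs : List (List ℕ)} (hnd : cs.flatten.Nodup) {c : List ℕ} {x : ℕ}
    (hc : c ∈ cs) (hx : x ∈ c) :
    orbitOf (applyCycles cs) x = {y | y ∈ c} := by
  have hlen : 0 < c.length := List.length_pos_iff.2 (by rintro rfl; simp at hx)
  ext z
  constructor
  · rintro ⟨j, rfl⟩
    rw [applyCycles_iterate hnd hc hx j]
    have hm : (c.idxOf x + j) % c.length < c.length := Nat.mod_lt _ hlen
    rw [List.getD_eq_getElem c 0 hm]
    exact List.getElem_mem hm
  · intro hz
    obtain ⟨j, hj, rfl⟩ := List.mem_iff_getElem.1 hz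
    have hi : c.idxOf x < c.length := List.idxOf_lt_length_iff.2 hx
    refine ⟨c.length + j - c.idxOf x, ?_⟩
    rw [applyCycles_iterate hnd hc hx]
    have he : (c.idxOf x + (c.length + j - c.idxOf x)) % c.length = j := by
      have h1 : c.idxOf x + (c.length + j - c.idxOf x) = c.length + j := by omega
      rw [h1, Nat.add_mod_left, Nat.mod_eq_of_lt hj]
    rw [he, List.getD_eq_getElem c 0 hj]

lemma numCycles_applyCycles {cs : List (List ℕ)} {n : ℕ}
    (hperm : cs.flatten.Perm (List.range' 1 n)) (hne : ∀ c ∈ cs, c ≠ []) :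
    numCycles n (applyCycles cs) = cs.length := by
  classical
  have hnd : cs.flatten.Nodup := hperm.nodup_iff.2 List.nodup_range'
  have hpw := (List.nodup_flatten.1 hnd).2
  have hmem : ∀ x, x ∈ cs.flatten ↔ (1 ≤ x ∧ x ≤ n) := by
    intro x
    rw [hperm.mem_iff, List.mem_range']
    constructor
    · rintro ⟨i, hi, rfl⟩; omega
    · intro h; exact ⟨x - 1, by omega, by omega⟩
  have hset : {s : Set ℕ | ∃ x, 1 ≤ x ∧ x ≤ n ∧ s = orbitOf (applyCycles cs) x}
      = (fun c : List ℕ => {y | y ∈ c}) '' {c | c ∈ cs} := by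
    ext s
    constructor
    · rintro ⟨x, h1, h2, rfl⟩
      have hxf : x ∈ cs.flatten := (hmem x).2 ⟨h1, h2⟩
      obtain ⟨c, hc, hxc⟩ := List.mem_flatten.1 hxf
      exact ⟨c, hc, (orbit_applyCycles hnd hc hxc).symm⟩
    · rintro ⟨c, hc, rfl⟩
      obtain ⟨x, hxc⟩ := List.exists_mem_of_ne_nil c (hne c hc)
      have hxf : x ∈ cs.flatten := List.mem_flatten.2 ⟨c, hc, hxc⟩
      have hxb := (hmem x).1 hxf
      exact ⟨x, hxb.1, hxb.2, (orbit_applyCycles hnd hc hxc).symm⟩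
  have hinj : Set.InjOn (fun c : List ℕ => {y | y ∈ c}) {c | c ∈ cs} := by
    intro c1 h1 c2 h2 he
    obtain ⟨y, hy⟩ := List.exists_mem_of_ne_nil c1 (hne c1 h1)
    have hy2 : y ∈ c2 := by
      have := (Set.ext_iff.1 he y).1
      simpa using this hy
    exact disjoint_of_nodup hnd c1 h1 c2 h2 y hy hy2
  have hcsnd : cs.Nodup := by
    rw [List.Nodup, List.pairwise_iff_forall_sublist]
    intro a b hsub
    have hdis : a.Disjoint b := List.pairwise_iff_forall_sublist.1 hpw hsub
    have ha : a ∈ cs := hsub.subset (by simp)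
    obtain ⟨y, hy⟩ := List.exists_mem_of_ne_nil a (hne a ha)
    rintro rfl
    exact hdis hy hy
  have hfin : {c : List ℕ | c ∈ cs} = ↑cs.toFinset := by ext c; simp
  rw [numCycles, hset, Set.ncard_image_of_injOn hinj, hfin, Set.ncard_coe_finset,
    List.toFinset_card_of_nodup hcsnd]

/-- The number of cycles (orbits on `{1,…,n}`) of `f₃ w` and of `f₄ w` both equal
the number of indices `i ∈ {1,…,n}` with `w i = 1`. -/
theorem cycles_count (n : ℕ) (w : ℕ → ℕ) (hw : IsWord n w) :
    numCycles n (applyCycles (f3Cycles n w)) =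
      ((List.range' 1 n).filter (fun i => decide (w i = 1))).length ∧
    numCycles n (f4Fun w n) =
      ((List.range' 1 n).filter (fun i => decide (w i = 1))).length := by
  refine ⟨?_, (f4_main w n hw).2.2⟩
  rcases Nat.eq_zero_or_pos n with rfl | hn
  · have hempty : {s : Set ℕ | ∃ x, 1 ≤ x ∧ x ≤ 0 ∧ s = orbitOf (applyCycles (f3Cycles 0 w)) x}
        = ∅ := by
      ext s
      simp only [Set.mem_setOf_eq, Set.mem_empty_iff_false, iff_false, not_exists]
      intro x h
      omega
    rw [numCycles, hempty, Set.ncard_empty]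
    simp
  · have hlen : (List.range' 2 (n-1)).length = n - 1 := by simp
    obtain ⟨hl, hp, hne⟩ := f3Go_spec_s18 w n [] [1] (List.range' 2 (n-1)) hlen
      (fun j h2 hj => hw j (by omega) hj) (by simp) (by simp)
    have hr : List.range' 1 n = 1 :: List.range' 2 (n-1) := by
      obtain ⟨k, rfl⟩ : ∃ k, n = k + 1 := ⟨n - 1, by omega⟩
      rw [List.range'_succ]
      norm_num
    have hperm : (f3Cycles n w).flatten.Perm (List.range' 1 n) := by
      rw [f3Cycles]
      refine hp.trans ?_
      rw [hr]
      simp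
    have hw1 : w 1 = 1 := by
      have := hw 1 le_rfl hn
      omega
    rw [numCycles_applyCycles hperm hne, f3Cycles, hl, hr, List.filter_cons]
    simp [hw1]
    omega
end
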